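/- arXiv:0904.4557 — 5 statements merged into one kernel-verified Lean document; each statement's English description precedes it below -/
import Mathlib

section
/- For every (t,x,ξ) in R^3 satisfying ∂S/∂ξ(t,x;ξ) = 0, the Hamilton–Jacobi identity ∂S/∂t(t,x;ξ) + ∂S/∂x(t,x;ξ) - (∂S/∂x(t,x;ξ))^3 - x = 0 holds. -/
/-- The function `y ↦ (c y)^4` is differentiable with derivative `(4/3) c y`. -/
lemma c_pow4_hasDerivAt (c : ℝ → ℝ) (hc_cont : Continuous c)
    (hc_cube : ∀ y : ℝ, (c y) ^ 3 = y) (y : ℝ) :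
    HasDerivAt (fun z => (c z) ^ 4) ((4 / 3) * c y) y := by
  have hc0 : c 0 = 0 := by
    have h := hc_cube 0
    exact pow_eq_zero_iff (by norm_num) |>.mp h
  rcases eq_or_ne y 0 with rfl | hy
  · rw [hasDerivAt_iff_tendsto_slope]
    have hev : (fun z => c z) =ᶠ[nhdsWithin 0 {(0:ℝ)}ᶜ] slope (fun z => (c z)^4) 0 := by
      filter_upwards [self_mem_nhdsWithin] with z hz
      have hz0 : z ≠ 0 := hz
      have : (c z)^4 = c z * z := by
        calc (c z)^4 = c z * (c z)^3 := by ring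
        _ = c z * z := by rw [hc_cube]
      simp only [slope_def_field, this, hc0]
      rw [eq_div_iff (by simpa using hz0)]
      ring
    have ht : Filter.Tendsto c (nhdsWithin 0 {(0:ℝ)}ᶜ) (nhds ((4/3) * c 0)) := by
      have h := (hc_cont.tendsto 0).mono_left (nhdsWithin_le_nhds (s := {(0:ℝ)}ᶜ))
      simpa [hc0] using h
    exact ht.congr' hev
  · have hcy : c y ≠ 0 := fun h => hy (by rw [← hc_cube y, h]; ring)
    have hf : HasDerivAt (fun x : ℝ => x ^ 3) (3 * (c y) ^ 2) (c y) := by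
      simpa using hasDerivAt_pow 3 (c y)
    have hne : (3 : ℝ) * (c y) ^ 2 ≠ 0 := by positivity
    have hgc : HasDerivAt c (3 * (c y) ^ 2)⁻¹ y :=
      HasDerivAt.of_local_left_inverse hc_cont.continuousAt hf hne
        (Filter.Eventually.of_forall hc_cube)
    have h4 : HasDerivAt (fun z => (c z) ^ 4)
        ((4 : ℕ) * (c y) ^ 3 * (3 * (c y) ^ 2)⁻¹) y := hgc.pow 4
    convert h4 using 1
    field_simp
    ring

/-- On the critical set `∂S/∂ξ = 0`, the generating function
`S(t,x;ξ) = ½ξ² + tξ - ¾ c(ξ-x+t)⁴ + ½t²` satisfies the Hamilton–Jacobi identity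
`∂S/∂t + ∂S/∂x - (∂S/∂x)³ - x = 0`. -/
theorem generating_function_HJ_identity (c : ℝ → ℝ)
    (hc_cont : Continuous c)
    (hc_odd : ∀ y : ℝ, c (-y) = -c y)
    (hc_cube : ∀ y : ℝ, (c y) ^ 3 = y)
    (S : ℝ → ℝ → ℝ → ℝ)
    (hS : ∀ t x ξ : ℝ, S t x ξ =
      (1 / 2) * ξ ^ 2 + t * ξ - (3 / 4) * (c (ξ - x + t)) ^ 4 + (1 / 2) * t ^ 2) :
    ∀ t x ξ : ℝ, deriv (fun ξ' => S t x ξ') ξ = 0 →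
      deriv (fun t' => S t' x ξ) t + deriv (fun x' => S t x' ξ) x
        - (deriv (fun x' => S t x' ξ) x) ^ 3 - x = 0 := by
  intro t x ξ hcrit
  set u : ℝ := ξ - x + t with hu
  have key := fun z => c_pow4_hasDerivAt c hc_cont hc_cube z
  -- derivative in ξ
  have innξ : HasDerivAt (fun ξ' : ℝ => ξ' - x + t) 1 ξ := by
    simpa using ((hasDerivAt_id ξ).sub_const x).add_const t
  have compξ : HasDerivAt (fun ξ' => (c (ξ' - x + t)) ^ 4) ((4/3) * c u * 1) ξ :=
    by have := (key u).comp ξ innξ; exact this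
  have hdξ : HasDerivAt (fun ξ' => (1/2) * ξ'^2 + t * ξ' - (3/4) * (c (ξ' - x + t))^4
      + (1/2) * t^2) (ξ + t - c u) ξ := by
    have h := ((((hasDerivAt_pow 2 ξ).const_mul (1/2 : ℝ)).add
      ((hasDerivAt_id ξ).const_mul t)).sub (compξ.const_mul (3/4 : ℝ))).add_const
      ((1/2) * t^2)
    refine h.congr_deriv ?_
    push_cast
    ring
  -- derivative in t
  have innt : HasDerivAt (fun t' : ℝ => ξ - x + t') 1 t := by
    simpa using (hasDerivAt_id t).const_add (ξ - x)
  have compt : HasDerivAt (fun t' => (c (ξ - x + t')) ^ 4) ((4/3) * c u * 1) t :=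
    (key u).comp t innt
  have hdt : HasDerivAt (fun t' => (1/2) * ξ^2 + t' * ξ - (3/4) * (c (ξ - x + t'))^4
      + (1/2) * t'^2) (ξ + t - c u) t := by
    have h := ((((hasDerivAt_const t ((1/2) * ξ^2)).add
      ((hasDerivAt_id t).mul_const ξ)).sub (compt.const_mul (3/4 : ℝ))).add
      ((hasDerivAt_pow 2 t).const_mul (1/2 : ℝ)))
    refine h.congr_deriv ?_
    push_cast
    ring
  -- derivative in x
  have innx : HasDerivAt (fun x' : ℝ => ξ - x' + t) (-1) x := by
    simpa using (((hasDerivAt_id x).const_sub ξ).add_const t)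
  have compx : HasDerivAt (fun x' => (c (ξ - x' + t)) ^ 4) ((4/3) * c u * (-1)) x :=
    by have := (key u).comp x innx; exact this
  have hdx : HasDerivAt (fun x' => (1/2) * ξ^2 + t * ξ - (3/4) * (c (ξ - x' + t))^4
      + (1/2) * t^2) (c u) x := by
    have h := ((((hasDerivAt_const x ((1/2) * ξ^2)).add
      (hasDerivAt_const x (t * ξ))).sub (compx.const_mul (3/4 : ℝ))).add_const
      ((1/2) * t^2))
    refine h.congr_deriv ?_
    ring
  have eξ : deriv (fun ξ' => S t x ξ') ξ = ξ + t - c u := by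
    rw [show (fun ξ' => S t x ξ') = fun ξ' => (1/2) * ξ'^2 + t * ξ' -
      (3/4) * (c (ξ' - x + t))^4 + (1/2) * t^2 from funext fun ξ' => hS t x ξ']
    exact hdξ.deriv
  have et : deriv (fun t' => S t' x ξ) t = ξ + t - c u := by
    rw [show (fun t' => S t' x ξ) = fun t' => (1/2) * ξ^2 + t' * ξ -
      (3/4) * (c (ξ - x + t'))^4 + (1/2) * t'^2 from funext fun t' => hS t' x ξ]
    exact hdt.deriv
  have ex : deriv (fun x' => S t x' ξ) x = c u := by
    rw [show (fun x' => S t x' ξ) = fun x' => (1/2) * ξ^2 + t * ξ -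
      (3/4) * (c (ξ - x' + t))^4 + (1/2) * t^2 from funext fun x' => hS t x' ξ]
    exact hdx.deriv
  rw [eξ] at hcrit
  rw [et, ex, hc_cube u, hu]
  linarith
end

section
/- For every fixed t in R, the set {(x, ∂S/∂x(t,x;ξ)) : (x,ξ) in R^2, ∂S/∂ξ(t,x;ξ) = 0} coincides with the curve {(s - s^3, s) : s in R}. That is, the Lagrangian submanifold generated by S(t,·;·) is exactly the graph {(x,p) : p - p^3 = x}. -/
/-- For every fixed `t`, the Lagrangian submanifold generated by `S(t,·;·)`, i.e. the set
`{(x, ∂S/∂x(t,x;ξ)) : ∂S/∂ξ(t,x;ξ) = 0}` (with `∂S/∂ξ = ξ + t - c(ξ-x+t)` and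
`∂S/∂x = c(ξ-x+t)`), coincides with the curve `{(s - s³, s) : s ∈ ℝ}`, i.e. with the
graph `{(x,p) : p - p³ = x}`. -/
theorem generated_lagrangian_is_cubic_curve (c : ℝ → ℝ)
    (hc_cont : Continuous c)
    (hc_odd : ∀ y : ℝ, c (-y) = -c y)
    (hc_cube : ∀ y : ℝ, (c y) ^ 3 = y)
    (t : ℝ) :
    {q : ℝ × ℝ | ∃ x ξ : ℝ, ξ + t - c (ξ - x + t) = 0 ∧ q = (x, c (ξ - x + t))}
      = {q : ℝ × ℝ | ∃ s : ℝ, q = (s - s ^ 3, s)} ∧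
    {q : ℝ × ℝ | ∃ s : ℝ, q = (s - s ^ 3, s)}
      = {q : ℝ × ℝ | q.2 - q.2 ^ 3 = q.1} := by
  have hcinv : ∀ s : ℝ, c (s ^ 3) = s := by
    intro s
    have h : (c (s ^ 3)) ^ 3 = s ^ 3 := hc_cube _
    exact (Odd.strictMono_pow (R := ℝ) (by decide)).injective h
  constructor
  · ext q
    simp only [Set.mem_setOf_eq]
    constructor
    · rintro ⟨x, ξ, h1, rfl⟩
      refine ⟨c (ξ - x + t), ?_⟩
      have hs : c (ξ - x + t) = ξ + t := by linarith
      have h3 : (c (ξ - x + t)) ^ 3 = ξ - x + t := hc_cube _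
      have : x = c (ξ - x + t) - (c (ξ - x + t)) ^ 3 := by
        rw [h3, hs]; ring
      exact Prod.ext this rfl
    · rintro ⟨s, rfl⟩
      refine ⟨s - s ^ 3, s - t, ?_, ?_⟩
      · have : s - t - (s - s ^ 3) + t = s ^ 3 := by ring
        rw [this, hcinv]; ring
      · have : s - t - (s - s ^ 3) + t = s ^ 3 := by ring
        rw [this, hcinv]
  · ext q
    simp only [Set.mem_setOf_eq]
    constructor
    · rintro ⟨s, rfl⟩; simp
    · intro h
      exact ⟨q.2, by rw [h]⟩
end

section
/- The function m is differentiable at every x < 0 with m'(x) = v^+(x), and differentiable at every x > 0 with m'(x) = v^-(x). -/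
open Filter Topology

private lemma Qpoly_nonneg (v w : ℝ) (hv : 1 ≤ v) :
    0 ≤ 2*w^4 + 4*v*w^3 + (6*v^2-3)*w^2 + (4*v^3-2*v)*w + 2*v^4 - v^2 := by
  nlinarith [sq_nonneg (w^2+v*w+v^2-3/4), sq_nonneg (w+v), sq_nonneg (v*w+1), sq_nonneg (w+1),
    sq_nonneg (v-1), sq_nonneg (v*w+v^2), mul_nonneg (sub_nonneg.2 hv) (sq_nonneg (w+1)),
    sq_nonneg (w^2+v*w)]

private lemma Ppoly_nonneg (v w : ℝ) (hv : 1 ≤ v) :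
    0 ≤ 2*w^6 - 3*w^4 + 4*v*w^3 - 4*v^3*w^3 - v^4 + 2*v^6 := by
  have h := mul_nonneg (sq_nonneg (w - v)) (Qpoly_nonneg v w hv)
  nlinarith [h]

/-- lower bound: for `v ≥ 1` and any `s`,
`½s² - ¾|s-(v-v³)|^{4/3} ≥ ½v² - ¾v⁴`. -/
private lemma lower_bound (v : ℝ) (hv : 1 ≤ v) (s : ℝ) :
    (1/2 : ℝ) * v ^ 2 - (3/4) * v ^ 4 ≤
      (1/2) * s ^ 2 - (3/4) * |s - (v - v^3)| ^ ((4:ℝ)/3) := by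
  set t : ℝ := s - (v - v^3) with ht
  set w : ℝ := if 0 ≤ t then t ^ ((1:ℝ)/3) else -((-t) ^ ((1:ℝ)/3)) with hw
  have hw3 : w ^ 3 = t := by
    by_cases h : 0 ≤ t
    · simp only [hw, if_pos h]
      rw [← Real.rpow_natCast (t ^ ((1:ℝ)/3)) 3, ← Real.rpow_mul h]
      norm_num
    · simp only [hw, if_neg h]
      push_neg at h
      have h' : (0:ℝ) ≤ -t := by linarith
      rw [neg_pow]
      rw [← Real.rpow_natCast ((-t) ^ ((1:ℝ)/3)) 3, ← Real.rpow_mul h']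
      norm_num
  have hw4 : w ^ 4 = |t| ^ ((4:ℝ)/3) := by
    have habs : |t| ^ ((4:ℝ)/3) = (|t| ^ ((1:ℝ)/3)) ^ 4 := by
      rw [← Real.rpow_natCast (|t| ^ ((1:ℝ)/3)) 4, ← Real.rpow_mul (abs_nonneg t)]
      norm_num
    rw [habs]
    by_cases h : 0 ≤ t
    · simp [hw, if_pos h, abs_of_nonneg h]
    · push_neg at h
      rw [hw, if_neg (not_le.2 h), abs_of_neg h]
      ring
  have hs : s = w ^ 3 + (v - v^3) := by rw [hw3]; ring
  have habs : |t| ^ ((4:ℝ)/3) = w ^ 4 := hw4.symm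
  rw [habs, hs]
  have := Ppoly_nonneg v w hv
  nlinarith [this]

private lemma rpow_cube (v : ℝ) (hv : 0 ≤ v) : (v ^ 3 : ℝ) ^ ((4:ℝ)/3) = v ^ 4 := by
  rw [← Real.rpow_natCast v 3, ← Real.rpow_mul hv,
    show (3:ℕ) * ((4:ℝ)/3) = ((4:ℕ):ℝ) by norm_num, Real.rpow_natCast]

/-- value of the infimum at `x = v - v³`, `v ≥ 1`. -/
private lemma inf_value (v : ℝ) (hv : 1 ≤ v) :
    (⨅ s : ℝ, ((1 / 2) * s ^ 2 - (3 / 4) * |s - (v - v^3)| ^ ((4 : ℝ) / 3)))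
      = (1/2) * v ^ 2 - (3/4) * v ^ 4 := by
  have hv0 : (0:ℝ) ≤ v := le_trans zero_le_one hv
  have hbdd : BddBelow (Set.range fun s : ℝ =>
      ((1 / 2) * s ^ 2 - (3 / 4) * |s - (v - v^3)| ^ ((4 : ℝ) / 3))) := by
    refine ⟨(1/2) * v ^ 2 - (3/4) * v ^ 4, ?_⟩
    rintro y ⟨s, rfl⟩
    exact lower_bound v hv s
  apply le_antisymm
  · have h := ciInf_le hbdd v
    calc (⨅ s : ℝ, ((1 / 2) * s ^ 2 - (3 / 4) * |s - (v - v^3)| ^ ((4 : ℝ) / 3)))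
        ≤ (1 / 2) * v ^ 2 - (3 / 4) * |v - (v - v^3)| ^ ((4 : ℝ) / 3) := h
      _ = (1/2) * v ^ 2 - (3/4) * v ^ 4 := by
          have : |v - (v - v^3)| = v ^ 3 := by
            rw [show v - (v - v^3) = v ^ 3 by ring, abs_of_nonneg (by positivity)]
          rw [this, rpow_cube v hv0]
  · exact le_ciInf (lower_bound v hv)

private noncomputable def mfun : ℝ → ℝ := fun x =>
  ⨅ s : ℝ, ((1 / 2) * s ^ 2 - (3 / 4) * |s - x| ^ ((4 : ℝ) / 3))

private lemma mfun_even (x : ℝ) : mfun (-x) = mfun x := by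
  unfold mfun
  have hrange : (Set.range fun s : ℝ =>
      ((1 / 2) * s ^ 2 - (3 / 4) * |s - (-x)| ^ ((4 : ℝ) / 3)))
      = (Set.range fun s : ℝ =>
      ((1 / 2) * s ^ 2 - (3 / 4) * |s - x| ^ ((4 : ℝ) / 3))) := by
    ext y
    constructor
    · rintro ⟨s, rfl⟩
      refine ⟨-s, ?_⟩
      have : |-s - x| = |s - -x| := by rw [← abs_neg]; ring_nf
      simp only [this]
      ring_nf
    · rintro ⟨s, rfl⟩
      refine ⟨-s, ?_⟩
      have : |-s - -x| = |s - x| := by rw [← abs_neg]; ring_nf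
      simp only [this]
      ring_nf
  simp only [iInf, hrange]

/-- main lemma, negative side -/
private lemma main_neg (x : ℝ) (hx : x < 0) (v : ℝ) (hv : 0 < v)
    (hvx : v - v ^ 3 = x) : HasDerivAt mfun v x := by
  have hv1 : 1 < v := by
    by_contra h
    push_neg at h
    nlinarith [mul_nonneg (mul_nonneg hv.le (sub_nonneg.2 h)) (by linarith : (0:ℝ) ≤ 1 + v)]
  -- p : v ↦ v - v³
  set p : ℝ → ℝ := fun w => w - w ^ 3 with hp_def
  have hp : HasStrictDerivAt p (1 - 3 * v ^ 2) v := by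
    have h1 : HasStrictDerivAt (fun w : ℝ => w) 1 v := hasStrictDerivAt_id v
    have h2 : HasStrictDerivAt (fun w : ℝ => w ^ 3) (3 * v ^ 2) v := by
      simpa using hasStrictDerivAt_pow 3 v
    exact h1.sub h2
  have h0 : (1 - 3 * v ^ 2) ≠ 0 := by nlinarith
  set φ := hp.localInverse p (1 - 3 * v ^ 2) v h0 with hφ_def
  have hφ : HasStrictDerivAt φ (1 - 3 * v ^ 2)⁻¹ (p v) := hp.to_localInverse h0
  have hpv : p v = x := hvx
  rw [hpv] at hφ
  have hφx : φ x = v := by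
    have := (hp.hasStrictFDerivAt_equiv h0).localInverse_apply_image
    rw [hpv] at this
    exact this
  -- eventually facts
  have hrinv : ∀ᶠ y in 𝓝 x, p (φ y) = y := by
    have := (hp.hasStrictFDerivAt_equiv h0).eventually_right_inverse
    rw [hpv] at this
    exact this
  have hcont : ContinuousAt φ x := by
    have := (hp.hasStrictFDerivAt_equiv h0).localInverse_continuousAt
    rw [hpv] at this
    exact this
  have hgt1 : ∀ᶠ y in 𝓝 x, 1 ≤ φ y := by
    have : Set.Ici (1:ℝ) ∈ 𝓝 v := Ici_mem_nhds hv1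
    have h2 : ∀ᶠ y in 𝓝 x, φ y ∈ Set.Ici (1:ℝ) := by
      have := hcont.tendsto
      rw [hφx] at this
      exact this.eventually_mem ‹Set.Ici (1:ℝ) ∈ 𝓝 v›
    exact h2
  have heq : ∀ᶠ y in 𝓝 x, mfun y = (1/2) * (φ y) ^ 2 - (3/4) * (φ y) ^ 4 := by
    filter_upwards [hrinv, hgt1] with y hy h1y
    have : y = φ y - (φ y) ^ 3 := hy.symm
    rw [show mfun y = mfun (φ y - (φ y)^3) by rw [← this]]
    exact inf_value (φ y) h1y
  -- derivative of G ∘ φ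
  have hG : HasDerivAt (fun w : ℝ => (1/2) * w ^ 2 - (3/4) * w ^ 4)
      ((1/2) * (2 * v) - (3/4) * (4 * v ^ 3)) v := by
    have h1 : HasDerivAt (fun w : ℝ => w) 1 v := hasDerivAt_id v
    have h2 := (h1.pow 2).const_mul (1/2 : ℝ)
    have h3 := (h1.pow 4).const_mul (3/4 : ℝ)
    have : HasDerivAt (fun w : ℝ => (1/2) * w ^ 2 - (3/4) * w ^ 4)
        (1 / 2 * ((2:ℕ) * v ^ (2 - 1) * 1) - 3 / 4 * ((4:ℕ) * v ^ (4 - 1) * 1)) v := h2.sub h3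
    convert this using 1
    norm_num
  have hG' : HasDerivAt (fun w : ℝ => (1/2) * w ^ 2 - (3/4) * w ^ 4)
      ((1/2) * (2 * v) - (3/4) * (4 * v ^ 3)) (φ x) := by
    rw [hφx]; exact hG
  have hcomp : HasDerivAt ((fun w : ℝ => (1/2) * w ^ 2 - (3/4) * w ^ 4) ∘ φ)
      (((1/2) * (2 * v) - (3/4) * (4 * v ^ 3)) * (1 - 3 * v ^ 2)⁻¹) x :=
    HasDerivAt.comp x hG' hφ.hasDerivAt
  have hval : ((1/2) * (2 * v) - (3/4) * (4 * v ^ 3)) * (1 - 3 * v ^ 2)⁻¹ = v := by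
    rw [mul_inv_eq_iff_eq_mul₀ h0]
    ring
  rw [hval] at hcomp
  exact hcomp.congr_of_eventuallyEq heq

private lemma main_pos (x : ℝ) (hx : 0 < x) (v : ℝ) (hv : v < 0)
    (hvx : v - v ^ 3 = x) : HasDerivAt mfun v x := by
  have h1 : HasDerivAt mfun (-v) (-x) := by
    apply main_neg (-x) (by linarith) (-v) (by linarith)
    rw [← hvx]; ring
  have hneg : HasDerivAt (mfun ∘ (fun y : ℝ => -y)) ((-v) * (-1)) x :=
    HasDerivAt.comp x h1 (hasDerivAt_neg' x)
  have heq2 : mfun ∘ (fun y : ℝ => -y) = mfun := funext fun y => mfun_even y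
  rw [heq2] at hneg
  simpa using hneg

/-- The variational solution `m(x) = inf_s [½s² - ¾|s-x|^{4/3}]` is differentiable at
every `x < 0` with `m'(x) = v⁺(x)` (the unique positive root of `v - v³ = x`), and at
every `x > 0` with `m'(x) = v⁻(x)` (the unique negative root). -/
theorem m_differentiable_off_zero :
    let m : ℝ → ℝ := fun x =>
      ⨅ s : ℝ, ((1 / 2) * s ^ 2 - (3 / 4) * |s - x| ^ ((4 : ℝ) / 3))
    (∀ x : ℝ, x < 0 → ∀ v : ℝ, 0 < v → v - v ^ 3 = x → HasDerivAt m v x) ∧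
    (∀ x : ℝ, 0 < x → ∀ v : ℝ, v < 0 → v - v ^ 3 = x → HasDerivAt m v x) := by
  intro m
  exact ⟨main_neg, main_pos⟩
end

section
/- The function u(t,x) := m(x) on R x R is not a viscosity subsolution of the equation ∂u/∂t + ∂u/∂x - (∂u/∂x)^3 - x = 0. Explicitly, for the smooth test function φ(t,x) := -1/4 + x/sqrt(3), the difference u - φ attains a local maximum at every point (t0, 0), and ∂φ/∂t(t0,0) + ∂φ/∂x(t0,0) - (∂φ/∂x(t0,0))^3 - 0 = 2/(3*sqrt(3)) > 0, so the subsolution inequality fails at (t0,0). -/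
lemma rpow_aux (t : ℝ) (ht : 0 ≤ t) :
    ∃ r : ℝ, 0 ≤ r ∧ r ^ 2 = t ^ ((4 : ℝ) / 3) ∧ r ^ 3 = t ^ 2 := by
  refine ⟨t ^ ((2 : ℝ) / 3), Real.rpow_nonneg ht _, ?_, ?_⟩
  · rw [← Real.rpow_natCast (t ^ ((2:ℝ)/3)) 2, ← Real.rpow_mul ht]
    norm_num
  · rw [← Real.rpow_natCast (t ^ ((2:ℝ)/3)) 3, ← Real.rpow_mul ht]
    norm_num

lemma young1 (t : ℝ) (ht : 0 ≤ t) : t ^ ((4 : ℝ) / 3) ≤ 2 / 3 * t ^ 2 + 1 / 3 := by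
  obtain ⟨r, hr, h2, h3⟩ := rpow_aux t ht
  nlinarith [mul_nonneg (sq_nonneg (r - 1)) (by linarith : (0:ℝ) ≤ 2 * r + 1)]

lemma young2 (t : ℝ) (ht : 0 ≤ t) : t ^ ((4 : ℝ) / 3) ≤ t ^ 2 / 3 + 4 / 3 := by
  obtain ⟨r, hr, h2, h3⟩ := rpow_aux t ht
  nlinarith [mul_nonneg (by linarith : (0:ℝ) ≤ r + 1) (sq_nonneg (r - 2))]

lemma bernoulli_aux (y : ℝ) (hy : 1 ≤ y) : y ≤ y ^ ((4 : ℝ) / 3) := by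
  nth_rewrite 1 [← Real.rpow_one y]
  exact Real.rpow_le_rpow_of_exponent_le hy (by norm_num)


/-- `u : ℝ × ℝ → ℝ`, `u = u(t,x)`, is a viscosity subsolution of
`∂u/∂t + ∂u/∂x - (∂u/∂x)³ - x = 0` if for every `C¹` test function `φ` and every local
maximum point `(t̄,x̄)` of `u - φ` one has
`∂φ/∂t + ∂φ/∂x - (∂φ/∂x)³ - x̄ ≤ 0`. -/
def IsViscositySubsolutionOfExample (u : ℝ → ℝ → ℝ) : Prop :=
  ∀ φ : ℝ → ℝ → ℝ, ContDiff ℝ 1 (fun p : ℝ × ℝ => φ p.1 p.2) →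
    ∀ t x : ℝ, IsLocalMax (fun p : ℝ × ℝ => u p.1 p.2 - φ p.1 p.2) (t, x) →
      deriv (fun t' => φ t' x) t + deriv (fun x' => φ t x') x
        - (deriv (fun x' => φ t x') x) ^ 3 - x ≤ 0

/-- `u(t,x) := m(x)` is not a viscosity subsolution of
`∂u/∂t + ∂u/∂x - (∂u/∂x)³ - x = 0`: for the smooth test function
`φ(t,x) = -1/4 + x/√3`, `u - φ` has a local maximum at every `(t₀, 0)`, while
`∂φ/∂t + ∂φ/∂x - (∂φ/∂x)³ - 0 = 2/(3√3) > 0`. -/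
theorem m_not_viscosity_subsolution :
    let m : ℝ → ℝ := fun x =>
      ⨅ s : ℝ, ((1 / 2) * s ^ 2 - (3 / 4) * |s - x| ^ ((4 : ℝ) / 3))
    let φ : ℝ → ℝ → ℝ := fun _ x => -(1 / 4) + x / Real.sqrt 3
    ¬ IsViscositySubsolutionOfExample (fun _ x => m x) ∧
    ContDiff ℝ 1 (fun p : ℝ × ℝ => φ p.1 p.2) ∧
    (∀ t₀ : ℝ, IsLocalMax (fun p : ℝ × ℝ => m p.2 - φ p.1 p.2) (t₀, 0)) ∧
    (∀ t₀ : ℝ,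
      deriv (fun t' => φ t' 0) t₀ + deriv (fun x' => φ t₀ x') 0
        - (deriv (fun x' => φ t₀ x') 0) ^ 3 - 0 = 2 / (3 * Real.sqrt 3)) ∧
    0 < 2 / (3 * Real.sqrt 3) := by
  intro m φ
  have hs0 : (0:ℝ) < Real.sqrt 3 := Real.sqrt_pos.mpr (by norm_num)
  have hs2 : Real.sqrt 3 ^ 2 = 3 := Real.sq_sqrt (by norm_num)
  have hs1 : (1:ℝ) ≤ Real.sqrt 3 := by nlinarith
  -- C¹ regularity of φ
  have hC1 : ContDiff ℝ 1 (fun p : ℝ × ℝ => φ p.1 p.2) :=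
    contDiff_const.add (contDiff_snd.div_const _)
  -- boundedness below of the infimand
  have hbdd : ∀ x : ℝ, BddBelow (Set.range fun s : ℝ =>
      (1 / 2) * s ^ 2 - (3 / 4) * |s - x| ^ ((4 : ℝ) / 3)) := by
    intro x
    refine ⟨-x ^ 2 / 2 - 1, ?_⟩
    rintro _ ⟨s, rfl⟩
    have h := young2 |s - x| (abs_nonneg _)
    rw [sq_abs] at h
    nlinarith [sq_nonneg (s + x)]
  -- lower bound m 0 ≥ -1/4
  have hm0 : -(1/4 : ℝ) ≤ m 0 := by
    refine le_ciInf fun s => ?_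
    have h := young1 |s - 0| (abs_nonneg _)
    rw [sq_abs] at h
    nlinarith
  -- upper bound m x ≤ -1/4 + x/√3
  have hup : ∀ x : ℝ, m x ≤ -(1/4 : ℝ) + x / Real.sqrt 3 := by
    intro x
    rcases le_or_gt 0 x with hx | hx
    · have hxd : 0 ≤ x / Real.sqrt 3 := div_nonneg hx hs0.le
      have h1 : m x ≤ (1/2) * (-1:ℝ) ^ 2 - (3/4) * |(-1:ℝ) - x| ^ ((4:ℝ)/3) :=
        ciInf_le (hbdd x) (-1)
      have habs : |(-1:ℝ) - x| = 1 + x := by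
        rw [abs_of_nonpos (by linarith)]; ring
      rw [habs] at h1
      have hb := bernoulli_aux (1 + x) (by linarith)
      nlinarith
    · have h43 : (4:ℝ)/3 ≤ Real.sqrt 3 := by nlinarith
      have hxd : (3/4) * x ≤ x / Real.sqrt 3 := by
        rw [le_div_iff₀ hs0]
        nlinarith [mul_nonneg (neg_nonneg.mpr hx.le)
          (by linarith : (0:ℝ) ≤ (3/4) * Real.sqrt 3 - 1)]
      have h1 : m x ≤ (1/2) * (1:ℝ) ^ 2 - (3/4) * |(1:ℝ) - x| ^ ((4:ℝ)/3) :=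
        ciInf_le (hbdd x) 1
      have habs : |(1:ℝ) - x| = 1 - x := by
        rw [abs_of_nonneg (by linarith)]
      rw [habs] at h1
      have hb := bernoulli_aux (1 - x) (by linarith)
      nlinarith
  -- local max
  have hlocmax : ∀ t₀ : ℝ, IsLocalMax (fun p : ℝ × ℝ => m p.2 - φ p.1 p.2) (t₀, 0) := by
    intro t₀
    refine Filter.Eventually.of_forall fun p => ?_
    show m p.2 - (-(1/4) + p.2 / Real.sqrt 3) ≤ m 0 - (-(1/4) + 0 / Real.sqrt 3)
    rw [zero_div]
    linarith [hup p.2]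
  -- derivative value
  have hval : ∀ t₀ : ℝ,
      deriv (fun t' => φ t' 0) t₀ + deriv (fun x' => φ t₀ x') 0
        - (deriv (fun x' => φ t₀ x') 0) ^ 3 - 0 = 2 / (3 * Real.sqrt 3) := by
    intro t₀
    have hdt : deriv (fun t' : ℝ => φ t' 0) t₀ = 0 := by
      have : (fun t' : ℝ => φ t' 0) = fun _ : ℝ => -(1/4) + 0 / Real.sqrt 3 := rfl
      rw [this, deriv_const]
    have hdx : deriv (fun x' : ℝ => φ t₀ x') 0 = 1 / Real.sqrt 3 := by
      exact (((hasDerivAt_id (0:ℝ)).div_const (Real.sqrt 3)).const_add (-(1/4))).deriv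
    rw [hdt, hdx]
    have hs3 : Real.sqrt 3 ^ 3 = 3 * Real.sqrt 3 := by
      rw [pow_succ, hs2]
    field_simp
    nlinarith
  have hpos : (0:ℝ) < 2 / (3 * Real.sqrt 3) := by positivity
  refine ⟨?_, hC1, hlocmax, hval, hpos⟩
  intro h
  have h2 := h φ hC1 0 0 (hlocmax 0)
  rw [hval 0] at h2
  linarith
end

section
/- Composition rule for generating functions: let S, F : R^k x R^k → R be differentiable and let φ, ψ : R^k x R^k → R^k x R^k be bijections such that for all points, φ(Q,P) = (q,p) if and only if P = -∇_Q S(Q,q) and p = ∇_q S(Q,q), and ψ(X,Y) = (x,y) if and only if Y = -∇_X F(X,x) and y = ∇_x F(X,x). Define G(Q,x;w) := S(Q,w) + F(w,x). Then for all (Q,P) and (x,y): (ψ ∘ φ)(Q,P) = (x,y) if and only if there exists w in R^k with ∇_w G(Q,x;w) = 0, P = -∇_Q G(Q,x;w), and y = ∇_x G(Q,x;w). -/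
open InnerProductSpace

section aux
variable {F : Type*} [NormedAddCommGroup F] [InnerProductSpace ℝ F] [CompleteSpace F]

lemma myHasGradientAt.add {f g : F → ℝ} {f' g' x : F}
    (hf : HasGradientAt f f' x) (hg : HasGradientAt g g' x) :
    HasGradientAt (fun y => f y + g y) (f' + g') x := by
  have := hf.hasFDerivAt.add hg.hasFDerivAt
  rw [hasGradientAt_iff_hasFDerivAt, map_add]
  exact this

lemma gradient_add {f g : F → ℝ} {x : F}
    (hf : DifferentiableAt ℝ f x) (hg : DifferentiableAt ℝ g x) :
    gradient (fun y => f y + g y) x = gradient f x + gradient g x :=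
  (myHasGradientAt.add hf.hasGradientAt hg.hasGradientAt).gradient

lemma gradient_add_const {f : F → ℝ} {x : F} (c : ℝ) :
    gradient (fun y => f y + c) x = gradient f x := by
  by_cases hf : DifferentiableAt ℝ f x
  · have : HasGradientAt (fun y => f y + c) (gradient f x + 0) x :=
      myHasGradientAt.add hf.hasGradientAt (hasGradientAt_const x c)
    rw [this.gradient, add_zero]
  · rw [gradient_eq_zero_of_not_differentiableAt hf,
      gradient_eq_zero_of_not_differentiableAt]
    intro h
    exact hf (by simpa using h.add_const (-c))

lemma gradient_const_add {f : F → ℝ} {x : F} (c : ℝ) :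
    gradient (fun y => c + f y) x = gradient f x := by
  simp_rw [add_comm c]; exact gradient_add_const c

end aux

/-- Composition rule for generating functions: if `S` generates the canonical
transformation `φ` and `F` generates `ψ`, then `G(Q,x;w) = S(Q,w) + F(w,x)` generates
`ψ ∘ φ`, the extra variable `w` playing the role of a parameter to be stationarized. -/
theorem composition_rule_generating_functions {k : ℕ}
    (S F : EuclideanSpace ℝ (Fin k) → EuclideanSpace ℝ (Fin k) → ℝ)
    (hSdiff : Differentiable ℝ
      (fun q : EuclideanSpace ℝ (Fin k) × EuclideanSpace ℝ (Fin k) => S q.1 q.2))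
    (hFdiff : Differentiable ℝ
      (fun q : EuclideanSpace ℝ (Fin k) × EuclideanSpace ℝ (Fin k) => F q.1 q.2))
    (φ ψ : EuclideanSpace ℝ (Fin k) × EuclideanSpace ℝ (Fin k) →
      EuclideanSpace ℝ (Fin k) × EuclideanSpace ℝ (Fin k))
    (hφbij : Function.Bijective φ) (hψbij : Function.Bijective ψ)
    (hφ : ∀ Q P q p : EuclideanSpace ℝ (Fin k), φ (Q, P) = (q, p) ↔
      (P = -gradient (fun Q' => S Q' q) Q ∧ p = gradient (fun q' => S Q q') q))
    (hψ : ∀ X Y x y : EuclideanSpace ℝ (Fin k), ψ (X, Y) = (x, y) ↔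
      (Y = -gradient (fun X' => F X' x) X ∧ y = gradient (fun x' => F X x') x)) :
    ∀ Q P x y : EuclideanSpace ℝ (Fin k), (ψ ∘ φ) (Q, P) = (x, y) ↔
      ∃ w : EuclideanSpace ℝ (Fin k),
        gradient (fun w' => S Q w' + F w' x) w = 0 ∧
        P = -gradient (fun Q' => S Q' w + F w x) Q ∧
        y = gradient (fun x' => S Q w + F w x') x := by
  intro Q P x y
  have hS2 : ∀ (a b : EuclideanSpace ℝ (Fin k)), DifferentiableAt ℝ (fun w' => S a w') b :=
    fun a b => (hSdiff.comp ((differentiable_const a).prodMk differentiable_id)).differentiableAt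
  have hF1 : ∀ (a b : EuclideanSpace ℝ (Fin k)), DifferentiableAt ℝ (fun w' => F w' a) b :=
    fun a b => (hFdiff.comp (differentiable_id.prodMk (differentiable_const a))).differentiableAt
  have key : ∀ w : EuclideanSpace ℝ (Fin k),
      gradient (fun w' => S Q w' + F w' x) w =
        gradient (fun w' => S Q w') w + gradient (fun w' => F w' x) w :=
    fun w => gradient_add (hS2 Q w) (hF1 x w)
  constructor
  · intro h
    have hq : φ (Q, P) = ((φ (Q, P)).1, (φ (Q, P)).2) := rfl
    obtain ⟨hP, hp⟩ := (hφ Q P _ _).mp hq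
    have hψ' : ψ ((φ (Q, P)).1, (φ (Q, P)).2) = (x, y) := by
      simpa using h
    obtain ⟨hY, hy⟩ := (hψ _ _ x y).mp hψ'
    refine ⟨(φ (Q, P)).1, ?_, ?_, ?_⟩
    · rw [key, ← hp]
      have : gradient (fun w' => F w' x) ((φ (Q, P)).1) = -(φ (Q, P)).2 := by
        rw [hY, neg_neg]
      rw [this, add_neg_cancel]
    · rw [show (fun Q' => S Q' (φ (Q, P)).1 + F (φ (Q, P)).1 x)
          = fun Q' => S Q' (φ (Q, P)).1 + (F (φ (Q, P)).1 x) from rfl,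
        gradient_add_const]
      exact hP
    · rw [gradient_const_add]
      exact hy
  · rintro ⟨w, hstat, hP, hy⟩
    rw [gradient_add_const] at hP
    rw [gradient_const_add] at hy
    have hφw : φ (Q, P) = (w, gradient (fun q' => S Q q') w) :=
      (hφ Q P w _).mpr ⟨hP, rfl⟩
    have hp : gradient (fun q' => S Q q') w = -gradient (fun X' => F X' x) w := by
      rw [key] at hstat
      linear_combination (norm := module) hstat
    have : ψ (w, gradient (fun q' => S Q q') w) = (x, y) :=
      (hψ w _ x y).mpr ⟨hp, hy⟩
    simp [Function.comp, hφw, this]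
end
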